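/- Let G be a finite strongly connected directed graph with edge weights in ℝ^k, and let (t_1,...,t_k) be a vector. If for every α > 0 there exists a finite cyclic path in G whose average weight is at least t_i - α in every dimension i, then there exists an infinite path in G whose mean-payoff vector (defined coordinatewise as the liminf of the average weight of its prefixes) is at least (t_1,...,t_k) in every dimension. -/

import Mathlib

open Filter Finset

section helpers
variable {V : Type*}

def catP (a : ℕ) (p q : ℕ → V) : ℕ → V := fun m => if m < a then p m else q (m - a)

lemma catP_left (a : ℕ) (p q : ℕ → V) (hpq : p a = q 0) (m : ℕ) (hm : m < a) :
    catP a p q m = p m ∧ catP a p q (m+1) = p (m+1) := by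
  refine ⟨by simp [catP, hm], ?_⟩
  by_cases h : m + 1 < a
  · simp [catP, h]
  · have he : m + 1 = a := by omega
    rw [he]; simp [catP, hpq.symm]

lemma catP_right (a : ℕ) (p q : ℕ → V) (m : ℕ) (hm : a ≤ m) :
    catP a p q m = q (m - a) ∧ catP a p q (m+1) = q (m - a + 1) := by
  constructor
  · simp [catP, Nat.not_lt.mpr hm]
  · have : ¬ (m + 1 < a) := by omega
    simp [catP, this, show m + 1 - a = m - a + 1 by omega]

lemma catP_end (a b : ℕ) (p q : ℕ → V) : catP a p q (a + b) = q b := by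
  simp [catP]

lemma catP_edge (E : V → V → Prop) (a b : ℕ) (p q : ℕ → V) (hpq : p a = q 0)
    (hp : ∀ m < a, E (p m) (p (m+1))) (hq : ∀ m < b, E (q m) (q (m+1))) :
    ∀ m < a + b, E (catP a p q m) (catP a p q (m+1)) := by
  intro m hm
  by_cases h : m < a
  · obtain ⟨h1, h2⟩ := catP_left a p q hpq m h
    rw [h1, h2]; exact hp m h
  · push_neg at h
    obtain ⟨h1, h2⟩ := catP_right a p q m h
    rw [h1, h2]; exact hq _ (by omega)

lemma catP_sum (f : V → V → ℝ) (a b : ℕ) (p q : ℕ → V) (hpq : p a = q 0) :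
    ∑ m ∈ range (a+b), f (catP a p q m) (catP a p q (m+1))
      = ∑ m ∈ range a, f (p m) (p (m+1)) + ∑ m ∈ range b, f (q m) (q (m+1)) := by
  rw [Finset.sum_range_add]
  congr 1
  · refine Finset.sum_congr rfl fun m hm => ?_
    obtain ⟨h1, h2⟩ := catP_left a p q hpq m (mem_range.mp hm)
    rw [h1, h2]
  · refine Finset.sum_congr rfl fun m hm => ?_
    obtain ⟨h1, h2⟩ := catP_right a p q (a + m) (Nat.le_add_right a m)
    rw [h1, h2]; simp

lemma cyc_next (q : ℕ → V) (n : ℕ) (hn : 0 < n) (hq : q n = q 0) (m : ℕ) :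
    q ((m+1) % n) = q (m % n + 1) := by
  have hlt : m % n < n := Nat.mod_lt m hn
  have key : (m+1) % n = (m % n + 1) % n := by
    conv_lhs => rw [← Nat.mod_add_mod]
  rcases eq_or_lt_of_le (Nat.succ_le_of_lt hlt) with h | h
  · rw [key, show m % n + 1 = n from h, Nat.mod_self, hq]
  · rw [key, Nat.mod_eq_of_lt h]

lemma sum_mod_cycle (f : ℕ → ℝ) (n r : ℕ) :
    ∑ m ∈ range (r * n), f (m % n) = r * ∑ m ∈ range n, f m := by
  induction r with
  | zero => simp
  | succ r ih =>
    rw [Nat.succ_mul, Finset.sum_range_add, ih]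
    have : ∀ x ∈ range n, f ((r * n + x) % n) = f x := by
      intro x hx
      rw [Nat.add_mod, Nat.mul_mod_left]
      simp [Nat.mod_eq_of_lt (mem_range.mp hx)]
    rw [Finset.sum_congr rfl this]; push_cast; ring

end helpers

lemma base_cycle {V : Type*} {k : ℕ} (E : V → V → Prop) (w : V → V → Fin k → ℝ) (t : Fin k → ℝ)
    (B : ℝ) (hB : 0 ≤ B) (hwB : ∀ u v i, |w u v i| ≤ B) (htB : ∀ i, |t i| ≤ B)
    (hconn : ∀ u v : V, ∃ (n : ℕ) (p : ℕ → V), p 0 = u ∧ p n = v ∧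
      ∀ m < n, E (p m) (p (m + 1)))
    (hcyc : ∀ α : ℝ, 0 < α → ∃ (n : ℕ) (p : ℕ → V), 0 < n ∧ p n = p 0 ∧
      (∀ m < n, E (p m) (p (m + 1))) ∧
      ∀ i : Fin k, t i - α ≤ (∑ m ∈ Finset.range n, w (p m) (p (m + 1)) i) / n)
    (v0 : V) :
    ∀ α : ℝ, 0 < α → ∃ (n : ℕ) (p : ℕ → V), 0 < n ∧ p 0 = v0 ∧ p n = v0 ∧
      (∀ m < n, E (p m) (p (m + 1))) ∧
      ∀ i : Fin k, (t i - α) * n ≤ ∑ m ∈ Finset.range n, w (p m) (p (m + 1)) i := by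
  intro α hα
  obtain ⟨n₁, Q, hn₁, hQc, hQe, hQavg⟩ := hcyc (α/2) (by positivity)
  obtain ⟨a, pa, hpa0, hpaa, hpae⟩ := hconn v0 (Q 0)
  obtain ⟨b, pb, hpb0, hpbb, hpbe⟩ := hconn (Q 0) v0
  have hn₁r : (0:ℝ) < (n₁:ℝ) := by exact_mod_cast hn₁
  have hQs : ∀ i, (t i - α/2) * n₁ ≤ ∑ m ∈ range n₁, w (Q m) (Q (m+1)) i := by
    intro i
    have h := hQavg i
    rw [le_div_iff₀ hn₁r] at h
    exact h
  obtain ⟨r₀, hr₀⟩ := exists_nat_ge ((2*B*((a:ℝ)+b)) / ((n₁:ℝ) * (α/2)))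
  set r := r₀ + 1 with hrdef
  have hrr : (r₀:ℝ) ≤ (r:ℝ) := by exact_mod_cast Nat.le_succ r₀
  have hr : 2*B*((a:ℝ)+b) ≤ (r:ℝ) * n₁ * (α/2) := by
    have h1 : (0:ℝ) < (n₁:ℝ) * (α/2) := by positivity
    rw [div_le_iff₀ h1] at hr₀
    nlinarith
  have hrn : 0 < r * n₁ := Nat.mul_pos (by omega) hn₁
  set mid : ℕ → V := fun m => Q (m % n₁) with hmiddef
  have hmide : ∀ m < r * n₁, E (mid m) (mid (m+1)) := by
    intro m _
    show E (Q (m % n₁)) (Q ((m+1) % n₁))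
    rw [cyc_next Q n₁ hn₁ hQc m]
    exact hQe _ (Nat.mod_lt m hn₁)
  set inner : ℕ → V := fun m => catP (r * n₁) mid pb m with hinnerdef
  have hchain1 : mid (r * n₁) = pb 0 := by
    show Q (r * n₁ % n₁) = pb 0
    rw [Nat.mul_mod_left, hpb0]
  have hinner0 : inner 0 = Q 0 := by
    show catP (r * n₁) mid pb 0 = Q 0
    simp [catP, hrn, hmiddef]
  have hchain0 : pa a = inner 0 := by rw [hpaa, hinner0]
  set p : ℕ → V := fun m => catP a pa inner m with hpdef
  set N := a + (r * n₁ + b) with hNdef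
  have hNpos : 0 < N := by omega
  have hedges : ∀ m < N, E (p m) (p (m+1)) :=
    catP_edge E a (r * n₁ + b) pa inner hchain0 hpae
      (catP_edge E (r * n₁) b mid pb hchain1 hmide hpbe)
  have hp0 : p 0 = v0 := by
    rcases Nat.eq_zero_or_pos a with h | h
    · have e : p 0 = inner 0 := by
        show catP a pa inner 0 = inner 0
        rw [h]
        rfl
      rw [e, hinner0, ← hpaa, h, hpa0]
    · show catP a pa inner 0 = v0
      simp [catP, h, hpa0]
  have hpN : p N = v0 := by
    show catP a pa inner (a + (r * n₁ + b)) = v0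
    rw [catP_end]
    show catP (r * n₁) mid pb (r * n₁ + b) = v0
    rw [catP_end, hpbb]
  refine ⟨N, p, hNpos, hp0, hpN, hedges, ?_⟩
  intro i
  have hsum : ∑ m ∈ range N, w (p m) (p (m+1)) i
      = ∑ m ∈ range a, w (pa m) (pa (m+1)) i
        + ((r:ℝ) * ∑ m ∈ range n₁, w (Q m) (Q (m+1)) i
          + ∑ m ∈ range b, w (pb m) (pb (m+1)) i) := by
    rw [hNdef]
    rw [catP_sum (fun u v => w u v i) a (r * n₁ + b) pa inner hchain0]
    congr 1
    rw [catP_sum (fun u v => w u v i) (r * n₁) b mid pb hchain1]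
    congr 1
    have he : ∀ m ∈ range (r * n₁),
        w (mid m) (mid (m+1)) i = (fun j => w (Q j) (Q (j+1)) i) (m % n₁) := by
      intro m _
      show w (Q (m % n₁)) (Q ((m+1) % n₁)) i = _
      rw [cyc_next Q n₁ hn₁ hQc m]
    rw [Finset.sum_congr rfl he, sum_mod_cycle (fun j => w (Q j) (Q (j+1)) i) n₁ r]
  rw [hsum]
  have hSA : -(B * a) ≤ ∑ m ∈ range a, w (pa m) (pa (m+1)) i := by
    have h1 : ∑ _m ∈ range a, (-B) ≤ ∑ m ∈ range a, w (pa m) (pa (m+1)) i :=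
      Finset.sum_le_sum fun m _ => (abs_le.mp (hwB _ _ i)).1
    simpa [mul_comm] using h1
  have hSB : -(B * b) ≤ ∑ m ∈ range b, w (pb m) (pb (m+1)) i := by
    have h1 : ∑ _m ∈ range b, (-B) ≤ ∑ m ∈ range b, w (pb m) (pb (m+1)) i :=
      Finset.sum_le_sum fun m _ => (abs_le.mp (hwB _ _ i)).1
    simpa [mul_comm] using h1
  have hti : t i ≤ B := (abs_le.mp (htB i)).2
  have hab : (0:ℝ) ≤ (a:ℝ) + b := by positivity
  have main : (t i - α + B) * ((a:ℝ) + b) ≤ (r:ℝ) * n₁ * (α/2) := by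
    have step1 : t i - α + B ≤ 2*B := by linarith
    exact le_trans (mul_le_mul_of_nonneg_right step1 hab) hr
  have hrpos : (0:ℝ) ≤ (r:ℝ) := by positivity
  have hmulQ : (r:ℝ) * ((t i - α/2) * n₁) ≤ (r:ℝ) * ∑ m ∈ range n₁, w (Q m) (Q (m+1)) i :=
    mul_le_mul_of_nonneg_left (hQs i) hrpos
  have hNr : ((N:ℕ):ℝ) = (a:ℝ) + (r:ℝ) * n₁ + b := by
    rw [hNdef]; push_cast; ring
  rw [hNr]
  nlinarith [hSA, hSB, main, hmulQ]


lemma infcat {V : Type*} (E : V → V → Prop) (len : ℕ → ℕ) (q : ℕ → ℕ → V) (c : ℕ → ℕ)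
    (hc0 : c 0 = 0) (hcs : ∀ l, c (l+1) = c l + len l)
    (hlen : ∀ l, 0 < len l)
    (hchain : ∀ l, q l (len l) = q (l+1) 0)
    (hedge : ∀ l, ∀ m < len l, E (q l m) (q l (m+1))) :
    ∃ P : ℕ → V, (∀ m, E (P m) (P (m+1))) ∧
      ∀ (f : V → V → ℝ) (l : ℕ), ∑ m ∈ range (c l), f (P m) (P (m+1))
        = ∑ j ∈ range l, ∑ m ∈ range (len j), f (q j m) (q j (m+1)) := by
  have hmono : Monotone c := monotone_nat_of_le_succ (fun j => by rw [hcs]; omega)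
  have hself : ∀ j, j ≤ c j := by
    intro j
    induction j with
    | zero => omega
    | succ j ih => rw [hcs]; have := hlen j; omega
  classical
  let J : ℕ → ℕ := fun m => Nat.findGreatest (fun j => c j ≤ m) m
  have hJ1 : ∀ m, c (J m) ≤ m := by
    intro m
    exact Nat.findGreatest_spec (P := fun j => c j ≤ m) (Nat.zero_le m)
      (by show c 0 ≤ m; rw [hc0]; exact Nat.zero_le m)
  have hJ2 : ∀ m, m < c (J m + 1) := by
    intro m
    by_contra hcon
    push_neg at hcon
    have h1 : J m + 1 ≤ m := le_trans (hself _) hcon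
    have h2 : J m + 1 ≤ J m := Nat.le_findGreatest (P := fun j => c j ≤ m) h1 hcon
    omega
  have hJu : ∀ m j, c j ≤ m → m < c (j+1) → J m = j := by
    intro m j h1 h2
    have hge : j ≤ J m := Nat.le_findGreatest (P := fun j => c j ≤ m) (le_trans (hself j) h1) h1
    have hle : J m ≤ j := by
      by_contra hcon
      push_neg at hcon
      have h3 : c (j+1) ≤ c (J m) := hmono hcon
      have := hJ1 m
      omega
    omega
  let P : ℕ → V := fun m => q (J m) (m - c (J m))
  have hP : ∀ j m, c j ≤ m → m < c (j+1) → P m = q j (m - c j) := by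
    intro j m h1 h2
    show q (J m) (m - c (J m)) = q j (m - c j)
    rw [hJu m j h1 h2]
  have hP' : ∀ j m, c j ≤ m → m ≤ c (j+1) → P m = q j (m - c j) := by
    intro j m h1 h2
    rcases lt_or_eq_of_le h2 with h | h
    · exact hP j m h1 h
    · have e : P m = q (j+1) 0 := by
        rw [hP (j+1) m (le_of_eq h.symm) (by rw [h, hcs (j+1)]; have := hlen (j+1); omega)]
        rw [h, Nat.sub_self]
      rw [e, ← hchain j, h, hcs]
      congr 1
      omega
  refine ⟨P, ?_, ?_⟩
  · intro m
    have h1 := hJ1 m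
    have h2 := hJ2 m
    have e1 : P m = q (J m) (m - c (J m)) := rfl
    have e2 : P (m+1) = q (J m) (m - c (J m) + 1) := by
      rw [hP' (J m) (m+1) (by omega) (by omega)]
      congr 1
      omega
    rw [e1, e2]
    exact hedge (J m) _ (by have := hcs (J m); omega)
  · intro f l
    induction l with
    | zero => simp [hc0]
    | succ l ih =>
      rw [Finset.sum_range_succ, ← ih, hcs, Finset.sum_range_add]
      congr 1
      refine Finset.sum_congr rfl fun x hx => ?_
      have hx' : x < len l := mem_range.mp hx
      have e1 : P (c l + x) = q l x := by
        rw [hP l (c l + x) (by omega) (by rw [hcs]; omega)]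
        congr 1
        omega
      have e2 : P (c l + x + 1) = q l (x + 1) := by
        rw [hP' l (c l + x + 1) (by omega) (by rw [hcs]; omega)]
        congr 1
        omega
      rw [e1, e2]


lemma core (S : ℕ → ℝ) (len : ℕ → ℕ) (c : ℕ → ℕ) (s γ : ℕ → ℝ) (τ B : ℝ)
    (hc0 : c 0 = 0) (hcs : ∀ l, c (l+1) = c l + len l) (hlen : ∀ l, 0 < len l)
    (hinc : ∀ n, S n - B ≤ S (n+1)) (hinc2 : ∀ n, S (n+1) ≤ S n + B)
    (hSc : ∀ l, S (c l) = ∑ u ∈ range l, s u)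
    (hs : ∀ l, (τ - γ l) * len l ≤ s l)
    (hγ0 : ∀ l, 0 ≤ γ l) (hγ : Filter.Tendsto γ atTop (nhds 0))
    (hB : 0 ≤ B) (hτ : |τ| ≤ B)
    (hratio : Filter.Tendsto (fun l => (len l : ℝ) / c l) atTop (nhds 0)) :
    τ ≤ Filter.liminf (fun n : ℕ => S n / n) atTop := by
  have hS0 : S 0 = 0 := by simpa [hc0] using hSc 0
  have hmono : Monotone c := monotone_nat_of_le_succ (fun j => by rw [hcs]; omega)
  have hself : ∀ j, j ≤ c j := by
    intro j
    induction j with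
    | zero => omega
    | succ j ih => rw [hcs]; have := hlen j; omega
  have hdev : ∀ m d, S m - B * d ≤ S (m + d) := by
    intro m d
    induction d with
    | zero => simp
    | succ d ih =>
      have h1 := hinc (m + d)
      have : (((d:ℕ)+1 : ℕ) : ℝ) = (d:ℝ) + 1 := by push_cast; ring
      rw [this, show m + (d+1) = (m + d) + 1 from rfl]
      linarith
  have hup : ∀ n : ℕ, S n ≤ B * n := by
    intro n
    induction n with
    | zero => simp [hS0]
    | succ n ih =>
      have := hinc2 n
      push_cast
      push_cast at ih
      linarith
  have hcr : ∀ l, (c l : ℝ) = ∑ u ∈ range l, (len u : ℝ) := by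
    intro l
    induction l with
    | zero => simp [hc0]
    | succ l ih => rw [hcs, Finset.sum_range_succ, ← ih]; push_cast; ring
  -- existence of block containing n
  classical
  have hex : ∀ n : ℕ, ∃ l, c l ≤ n ∧ n < c (l+1) := by
    intro n
    refine ⟨Nat.findGreatest (fun j => c j ≤ n) n, ?_, ?_⟩
    · exact Nat.findGreatest_spec (P := fun j => c j ≤ n) (Nat.zero_le n)
        (by show c 0 ≤ n; rw [hc0]; exact Nat.zero_le n)
    · by_contra hcon
      push_neg at hcon
      have h1 : Nat.findGreatest (fun j => c j ≤ n) n + 1 ≤ n := le_trans (hself _) hcon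
      have h2 := Nat.le_findGreatest (P := fun j => c j ≤ n) h1 hcon
      omega
  have hev : ∀ ε : ℝ, 0 < ε → ∀ᶠ n : ℕ in atTop, τ - ε ≤ S n / n := by
    intro ε hε
    have h4 : (0:ℝ) < ε / 4 := by positivity
    have hBpos : (0:ℝ) < 2 * B + 1 := by linarith
    obtain ⟨l0a, hl0a⟩ := eventually_atTop.mp (hγ.eventually_lt_const h4)
    obtain ⟨l0b, hl0b⟩ := eventually_atTop.mp
      (hratio.eventually_lt_const (show (0:ℝ) < ε / (4 * (2*B+1)) by positivity))
    set l0 := max (max l0a l0b) 1 with hl0def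
    set K := ∑ u ∈ range l0, γ u * (len u : ℝ) with hKdef
    have hK0 : 0 ≤ K := Finset.sum_nonneg fun u _ => mul_nonneg (hγ0 u) (by positivity)
    obtain ⟨N1, hN1⟩ := exists_nat_ge (K / (ε/4))
    rw [eventually_atTop]
    refine ⟨max (c l0) N1 + 1, fun n hn => ?_⟩
    obtain ⟨l, hl1, hl2⟩ := hex n
    have hnpos : 0 < n := by omega
    have hll0 : l0 ≤ l := by
      by_contra hcon
      push_neg at hcon
      have : c (l+1) ≤ c l0 := hmono (by omega)
      omega
    have hl1' : 1 ≤ l := le_trans (by omega) hll0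
    have hclpos : 0 < c l := lt_of_lt_of_le hl1' (hself l)
    -- real abbreviations
    have hγl : γ l ≤ ε / 4 := (hl0a l (by omega)).le
    have hrl : (len l : ℝ) / c l ≤ ε / (4 * (2*B+1)) := (hl0b l (by omega)).le
    have p5 : (2*B+1) * (len l : ℝ) ≤ (ε/4) * c l := by
      have hclr : (0:ℝ) < (c l : ℝ) := by exact_mod_cast hclpos
      rw [div_le_iff₀ hclr] at hrl
      calc (2*B+1) * (len l : ℝ) ≤ (2*B+1) * (ε / (4 * (2*B+1)) * c l) := by
            apply mul_le_mul_of_nonneg_left hrl (by linarith)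
        _ = (ε/4) * c l := by field_simp
    have p6 : K ≤ (ε/4) * n := by
      rw [div_le_iff₀ h4] at hN1
      have : (N1 : ℝ) ≤ (n : ℝ) := by exact_mod_cast (by omega : N1 ≤ n)
      nlinarith
    -- sum bound
    have p4 : ∑ u ∈ range l, γ u * (len u : ℝ) ≤ K + (ε/4) * c l := by
      have hsplit : ∑ u ∈ range l, γ u * (len u : ℝ)
          = K + ∑ u ∈ Ico l0 l, γ u * (len u : ℝ) := by
        rw [hKdef, Finset.range_eq_Ico, Finset.range_eq_Ico]
        exact (Finset.sum_Ico_consecutive _ (Nat.zero_le l0) hll0).symm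
      have hbound : ∑ u ∈ Ico l0 l, γ u * (len u : ℝ) ≤ (ε/4) * ∑ u ∈ Ico l0 l, (len u : ℝ) := by
        rw [Finset.mul_sum]
        refine Finset.sum_le_sum fun u hu => ?_
        have hu' : l0 ≤ u := (Finset.mem_Ico.mp hu).1
        exact mul_le_mul_of_nonneg_right ((hl0a u (by omega)).le) (by positivity)
      have hsub : ∑ u ∈ Ico l0 l, (len u : ℝ) ≤ (c l : ℝ) := by
        rw [hcr l, Finset.range_eq_Ico]
        refine Finset.sum_le_sum_of_subset_of_nonneg ?_ (fun u _ _ => by positivity)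
        exact Finset.Ico_subset_Ico (Nat.zero_le l0) le_rfl
      nlinarith
    have p3 : τ * (c l : ℝ) - ∑ u ∈ range l, γ u * (len u : ℝ) ≤ S (c l) := by
      rw [hSc l]
      have : τ * (c l : ℝ) - ∑ u ∈ range l, γ u * (len u : ℝ)
          = ∑ u ∈ range l, (τ - γ u) * (len u : ℝ) := by
        rw [hcr l, Finset.mul_sum, ← Finset.sum_sub_distrib]
        refine Finset.sum_congr rfl fun u _ => by ring
      rw [this]
      exact Finset.sum_le_sum fun u _ => hs u
    set dl : ℝ := ((n - c l : ℕ) : ℝ) with hdl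
    have p1 : S (c l) - B * dl ≤ S n := by
      have := hdev (c l) (n - c l)
      rwa [Nat.add_sub_cancel' hl1] at this
    have p2 : dl ≤ (len l : ℝ) := by
      have h : n - c l ≤ len l := by have := hcs l; omega
      rw [hdl]
      exact_mod_cast h
    have p2' : (0:ℝ) ≤ dl := by positivity
    have p2'' : dl = (n:ℝ) - (c l : ℝ) := by
      rw [hdl]; push_cast [hl1]; ring
    have p7 : (c l : ℝ) ≤ (n : ℝ) := by exact_mod_cast hl1
    obtain ⟨pτ1, pτ2⟩ := abs_le.mp hτ
    have pll : (0:ℝ) ≤ (len l : ℝ) := by positivity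
    have p13 : B * dl ≤ B * (len l : ℝ) := mul_le_mul_of_nonneg_left p2 hB
    have p9 : τ * dl ≤ B * (len l : ℝ) :=
      le_trans (mul_le_mul_of_nonneg_right pτ2 p2') p13
    have p10 : (ε/4) * (c l : ℝ) ≤ (ε/4) * (n : ℝ) := mul_le_mul_of_nonneg_left p7 h4.le
    have p11 : τ * (c l : ℝ) = τ * (n : ℝ) - τ * dl := by rw [p2'']; ring
    have p12 : (0:ℝ) ≤ ε * n := by positivity
    have hfin : (τ - ε) * (n : ℝ) ≤ S n := by
      linarith [p1, p3, p4, p5, p6, p9, p10, p11, p12, p13, pll]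
    have hnr : (0:ℝ) < (n:ℝ) := by exact_mod_cast hnpos
    rw [le_div_iff₀ hnr]
    exact hfin
  -- coboundedness
  have hub : ∀ n : ℕ, S n / n ≤ B := by
    intro n
    cases n with
    | zero => simp [hS0, hB]
    | succ n =>
      have hnr : (0:ℝ) < ((n+1 : ℕ):ℝ) := by positivity
      rw [div_le_iff₀ hnr]
      have := hup (n+1)
      push_cast at this ⊢
      linarith
  have hcob : Filter.IsCoboundedUnder (· ≥ ·) atTop (fun n : ℕ => S n / n) := by
    refine ⟨B, fun a ha => ?_⟩
    obtain ⟨n, hn⟩ := (eventually_map.mp ha).exists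
    exact le_trans hn (hub n)
  have hlim : ∀ ε : ℝ, 0 < ε → τ - ε ≤ Filter.liminf (fun n : ℕ => S n / n) atTop :=
    fun ε hε => Filter.le_liminf_of_le hcob (hev ε hε)
  refine le_of_forall_pos_le_add fun ε hε => ?_
  linarith [hlim ε hε]

/-- In a finite strongly connected directed graph with `ℝ^k` edge weights,
if for every `α > 0` there is a cyclic path with average weight at least `t i - α` in every
dimension, then there is an infinite path with mean-payoff vector at least `t`. -/
theorem stmt0 {V : Type*} [Fintype V] {k : ℕ}
    (E : V → V → Prop) (w : V → V → Fin k → ℝ) (t : Fin k → ℝ)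
    (hconn : ∀ u v : V, ∃ (n : ℕ) (p : ℕ → V), p 0 = u ∧ p n = v ∧
      ∀ m < n, E (p m) (p (m + 1)))
    (hcyc : ∀ α : ℝ, 0 < α → ∃ (n : ℕ) (p : ℕ → V), 0 < n ∧ p n = p 0 ∧
      (∀ m < n, E (p m) (p (m + 1))) ∧
      ∀ i : Fin k, t i - α ≤ (∑ m ∈ Finset.range n, w (p m) (p (m + 1)) i) / n) :
    ∃ p : ℕ → V, (∀ m : ℕ, E (p m) (p (m + 1))) ∧
      ∀ i : Fin k, t i ≤ liminf (fun n : ℕ =>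
        (∑ m ∈ Finset.range n, w (p m) (p (m + 1)) i) / n) atTop := by
  classical
  obtain ⟨n1, p1, hn1, -⟩ := hcyc 1 one_pos
  set v0 : V := p1 0 with hv0
  set A : ℝ := ∑ u : V, ∑ v : V, ∑ i : Fin k, |w u v i| with hAdef
  set T : ℝ := ∑ i : Fin k, |t i| with hTdef
  set B : ℝ := A + T + 1 with hBdef
  have hA0 : 0 ≤ A := by positivity
  have hT0 : 0 ≤ T := by positivity
  have hB : 0 ≤ B := by rw [hBdef]; linarith
  have hwB : ∀ u v i, |w u v i| ≤ B := by
    intro u v i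
    have h1 : |w u v i| ≤ ∑ i' : Fin k, |w u v i'| :=
      Finset.single_le_sum (f := fun i' => |w u v i'|) (fun _ _ => abs_nonneg _) (Finset.mem_univ i)
    have h2 : ∑ i' : Fin k, |w u v i'| ≤ ∑ v' : V, ∑ i' : Fin k, |w u v' i'| :=
      Finset.single_le_sum (f := fun v' => ∑ i' : Fin k, |w u v' i'|)
        (fun _ _ => by positivity) (Finset.mem_univ v)
    have h3 : ∑ v' : V, ∑ i' : Fin k, |w u v' i'| ≤ A :=
      Finset.single_le_sum (f := fun u' => ∑ v' : V, ∑ i' : Fin k, |w u' v' i'|)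
        (fun _ _ => by positivity) (Finset.mem_univ u)
    rw [hBdef]; linarith
  have htB : ∀ i, |t i| ≤ B := by
    intro i
    have h1 : |t i| ≤ T :=
      Finset.single_le_sum (f := fun i' => |t i'|) (fun _ _ => abs_nonneg _) (Finset.mem_univ i)
    rw [hBdef]; linarith
  have hbase := base_cycle E w t B hB hwB htB hconn hcyc v0
  choose n q hn hq0 hqn hqe hqs using fun j : ℕ => hbase (1/((j:ℝ)+1)) (by positivity)
  -- block-selection recursion
  let g : ℕ → ℕ × ℕ := fun l => Nat.rec ((0:ℕ), (0:ℕ))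
    (fun _ pr => (if (pr.1+1) * n (pr.1+1) ≤ pr.2 + n pr.1 then pr.1+1 else pr.1,
      pr.2 + n pr.1)) l
  set Jf : ℕ → ℕ := fun l => (g l).1 with hJfdef
  set C : ℕ → ℕ := fun l => (g l).2 with hCdef
  have hJ0 : Jf 0 = 0 := rfl
  have hC0 : C 0 = 0 := rfl
  have hCs : ∀ l, C (l+1) = C l + n (Jf l) := fun l => rfl
  have hJs : ∀ l, Jf (l+1) =
      if (Jf l + 1) * n (Jf l + 1) ≤ C l + n (Jf l) then Jf l + 1 else Jf l := fun l => rfl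
  have hJstep : ∀ l, Jf l ≤ Jf (l+1) ∧ Jf (l+1) ≤ Jf l + 1 := by
    intro l
    rw [hJs l]
    split <;> omega
  have hJmono : Monotone Jf := monotone_nat_of_le_succ fun l => (hJstep l).1
  have hinv : ∀ l, Jf l * n (Jf l) ≤ C l := by
    intro l
    induction l with
    | zero => simp [hJ0, hC0]
    | succ l ih =>
      rw [hCs]
      by_cases h : (Jf l + 1) * n (Jf l + 1) ≤ C l + n (Jf l)
      · rw [hJs l, if_pos h]; exact h
      · rw [hJs l, if_neg h]; omega
  have hgrow : ∀ l, ∃ l', l ≤ l' ∧ Jf l + 1 ≤ Jf l' := by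
    intro l
    by_contra hcon
    push_neg at hcon
    have heq : ∀ d, Jf (l + d) = Jf l ∧ C (l + d) = C l + d * n (Jf l) := by
      intro d
      induction d with
      | zero => simp
      | succ d ih =>
        have h1 : Jf (l + d + 1) ≤ Jf l := Nat.lt_succ_iff.mp (hcon (l + d + 1) (by omega))
        have h2 : Jf l ≤ Jf (l + d + 1) := hJmono (show l ≤ l + d + 1 by omega)
        constructor
        · rw [show l + (d+1) = l + d + 1 by omega]; omega
        · rw [show l + (d+1) = l + d + 1 by omega, hCs, ih.2, ih.1]; ring
    set D := (Jf l + 1) * n (Jf l + 1) with hDdef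
    have hJD := (heq D).1
    have hCD := (heq D).2
    have hguard : (Jf (l+D) + 1) * n (Jf (l+D) + 1) ≤ C (l+D) + n (Jf (l+D)) := by
      rw [hJD, hCD]
      have h6 : D ≤ D * n (Jf l) := Nat.le_mul_of_pos_right _ (hn _)
      omega
    have h7 : Jf (l + D + 1) = Jf l + 1 := by
      rw [hJs (l+D), if_pos hguard, hJD]
    have h5 := (heq (D+1)).1
    rw [show l + (D+1) = l + D + 1 by omega] at h5
    omega
  have hJub : ∀ M, ∃ l, M ≤ Jf l := by
    intro M
    induction M with
    | zero => exact ⟨0, by omega⟩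
    | succ M ih =>
      obtain ⟨l, hl⟩ := ih
      obtain ⟨l', hl1, hl2⟩ := hgrow l
      refine ⟨l', ?_⟩
      have := hJmono hl1
      omega
  have hJtop : Filter.Tendsto Jf atTop atTop :=
    tendsto_atTop_atTop.mpr fun M => by
      obtain ⟨l, hl⟩ := hJub M
      exact ⟨l, fun a ha => le_trans hl (hJmono ha)⟩
  obtain ⟨P, hPedge, hPsum⟩ := infcat E (fun l => n (Jf l)) (fun l => q (Jf l)) C
    hC0 hCs (fun l => hn _) (fun l => by show q (Jf l) (n (Jf l)) = q (Jf (l+1)) 0; rw [hqn, hq0]) (fun l => hqe (Jf l))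
  refine ⟨P, hPedge, ?_⟩
  intro i
  have hinc : ∀ m, (∑ x ∈ Finset.range m, w (P x) (P (x+1)) i) - B
      ≤ ∑ x ∈ Finset.range (m+1), w (P x) (P (x+1)) i := by
    intro m
    rw [Finset.sum_range_succ]
    have := (abs_le.mp (hwB (P m) (P (m+1)) i)).1
    linarith
  have hinc2 : ∀ m, (∑ x ∈ Finset.range (m+1), w (P x) (P (x+1)) i)
      ≤ (∑ x ∈ Finset.range m, w (P x) (P (x+1)) i) + B := by
    intro m
    rw [Finset.sum_range_succ]
    have := (abs_le.mp (hwB (P m) (P (m+1)) i)).2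
    linarith
  have hγ : Filter.Tendsto (fun l => 1/((Jf l : ℝ)+1)) atTop (nhds 0) :=
    tendsto_one_div_add_atTop_nhds_zero_nat.comp hJtop
  have hratio : Filter.Tendsto (fun l => ((n (Jf l) : ℝ)) / (C l : ℝ)) atTop (nhds 0) := by
    have hJinv : Filter.Tendsto (fun l => 1/((Jf l : ℝ))) atTop (nhds 0) :=
      tendsto_one_div_atTop_nhds_zero_nat.comp hJtop
    apply squeeze_zero' (Filter.Eventually.of_forall (fun l => by positivity)) ?_ hJinv
    have hev : ∀ᶠ l in atTop, 1 ≤ Jf l := by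
      obtain ⟨l0, hl0⟩ := hJub 1
      rw [eventually_atTop]
      exact ⟨l0, fun l hl => le_trans hl0 (hJmono hl)⟩
    filter_upwards [hev] with l hl
    have hinvl := hinv l
    have hCpos : 0 < C l := lt_of_lt_of_le (Nat.mul_pos (by omega) (hn _)) hinvl
    rw [div_le_div_iff₀ (by exact_mod_cast hCpos)
      (by exact_mod_cast hl : (0:ℝ) < (Jf l : ℝ)), one_mul]
    exact_mod_cast (by rw [Nat.mul_comm]; exact hinvl : n (Jf l) * Jf l ≤ C l)
  exact core (fun m => ∑ x ∈ Finset.range m, w (P x) (P (x+1)) i) (fun l => n (Jf l)) C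
    (fun l => ∑ m ∈ Finset.range (n (Jf l)), w (q (Jf l) m) (q (Jf l) (m+1)) i)
    (fun l => 1/((Jf l : ℝ)+1)) (t i) B hC0 hCs (fun l => hn _)
    hinc hinc2 (fun l => hPsum (fun u v => w u v i) l)
    (fun l => hqs (Jf l) i) (fun l => by positivity) hγ hB (htB i) hratio
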